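/- Let k > 0, a > 0, T₁ > T∞ ≥ 0 be real numbers and let 0 < α < 1. Define T(x) = (T₁ − T∞)·x^(−α) + T∞ and f(x) = (k·x + a)·T(x) for x > 0. Then there exists a real number x₀ with 0 < x₀ ≤ (a/k)·(α/(1 − α)) such that f is strictly decreasing on (0, x₀] and strictly increasing on [x₀, ∞). In particular, f attains a unique minimum on (0, ∞) at x₀. -/

import Mathlib

/-- With `T x = (T₁ - T∞) * x ^ (-α) + T∞` and
`f x = (k·x + a)·T x` (`k, a > 0`, `T₁ > T∞ ≥ 0`, `0 < α < 1`),
there is `x₀` with `0 < x₀ ≤ (a/k)·(α/(1 − α))` such that `f` is strictly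
decreasing on `(0, x₀]` and strictly increasing on `[x₀, ∞)`; in particular
`f` attains a unique minimum on `(0, ∞)` at `x₀`. -/
theorem stmt9 (k a T₁ Tinf α : ℝ) (hk : 0 < k) (ha : 0 < a)
    (hTinf : 0 ≤ Tinf) (hT₁ : Tinf < T₁) (hα0 : 0 < α) (hα1 : α < 1)
    (T f : ℝ → ℝ)
    (hT : ∀ x : ℝ, 0 < x → T x = (T₁ - Tinf) * x ^ (-α) + Tinf)
    (hf : ∀ x : ℝ, 0 < x → f x = (k * x + a) * T x) :
    ∃ x₀ : ℝ, 0 < x₀ ∧ x₀ ≤ (a / k) * (α / (1 - α)) ∧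
      StrictAntiOn f (Set.Ioc (0 : ℝ) x₀) ∧
      StrictMonoOn f (Set.Ici x₀) ∧
      ∀ x : ℝ, 0 < x → x ≠ x₀ → f x₀ < f x := by
  set c : ℝ := T₁ - Tinf with hc_def
  have hc : 0 < c := sub_pos.mpr hT₁
  have h1α : 0 < 1 - α := by linarith
  set X : ℝ := a / k * (α / (1 - α)) with hX_def
  have hXpos : 0 < X := by positivity
  have hkX : k * (1 - α) * X = α * a := by
    rw [hX_def, div_mul_div_comm, mul_div_assoc', div_eq_iff (mul_pos hk h1α).ne']; ring
  set F : ℝ → ℝ := fun x => (k * x + a) * (c * x ^ (-α) + Tinf) with hF_def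
  set φ : ℝ → ℝ := fun x => c * x ^ (-α - 1) * (k * (1 - α) * x - α * a) + k * Tinf
    with hφ_def
  -- derivative of F is φ on (0, ∞)
  have hderiv : ∀ x : ℝ, 0 < x → HasDerivAt F (φ x) x := by
    intro x hx
    have h1 : HasDerivAt (fun y : ℝ => y ^ (-α)) (-α * x ^ (-α - 1)) x :=
      Real.hasDerivAt_rpow_const (Or.inl hx.ne')
    have h2 : HasDerivAt (fun y : ℝ => c * y ^ (-α) + Tinf)
        (c * (-α * x ^ (-α - 1))) x := (h1.const_mul c).add_const Tinf
    have h3 : HasDerivAt (fun y : ℝ => k * y + a) k x := by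
      simpa using ((hasDerivAt_id x).const_mul k).add_const a
    have h4 := h3.mul h2
    have hxx : x ^ (-α) = x ^ (-α - 1) * x := by
      rw [← Real.rpow_add_one hx.ne' (-α - 1)]; ring_nf
    refine (h4 : HasDerivAt F _ x).congr_deriv ?_
    show _ = c * x ^ (-α - 1) * (k * (1 - α) * x - α * a) + k * Tinf
    rw [hxx]; ring
  -- φ is strictly monotone on (0, X]
  have hφmono : ∀ x y : ℝ, 0 < x → x < y → y ≤ X → φ x < φ y := by
    intro x y hx hxy hyX
    have hy : 0 < y := hx.trans hxy
    have hpows : x ^ (α + 1) < y ^ (α + 1) :=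
      Real.rpow_lt_rpow hx.le hxy (by positivity)
    have hxe : x ^ (-α - 1) = (x ^ (α + 1))⁻¹ := by
      rw [← Real.rpow_neg hx.le]; ring_nf
    have hye : y ^ (-α - 1) = (y ^ (α + 1))⁻¹ := by
      rw [← Real.rpow_neg hy.le]; ring_nf
    have hxp : 0 < x ^ (α + 1) := Real.rpow_pos_of_pos hx _
    have hyp : 0 < y ^ (α + 1) := Real.rpow_pos_of_pos hy _
    have hPQ : y ^ (-α - 1) < x ^ (-α - 1) := by
      rw [hxe, hye]; exact (inv_lt_inv₀ hyp hxp).mpr hpows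
    have hQ0 : 0 < y ^ (-α - 1) := Real.rpow_pos_of_pos hy _
    have hby : k * (1 - α) * y - α * a ≤ 0 := by
      have := mul_le_mul_of_nonneg_left hyX (mul_pos hk h1α).le
      linarith
    have hbx : k * (1 - α) * x - α * a < k * (1 - α) * y - α * a := by
      have := mul_lt_mul_of_pos_left hxy (mul_pos hk h1α)
      linarith
    have hbx0 : k * (1 - α) * x - α * a < 0 := by linarith
    simp only [hφ_def]
    have h1 : c * x ^ (-α - 1) * (k * (1 - α) * x - α * a)
        < c * y ^ (-α - 1) * (k * (1 - α) * x - α * a) :=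
      mul_lt_mul_of_neg_right (mul_lt_mul_of_pos_left hPQ hc) hbx0
    have h2 : c * y ^ (-α - 1) * (k * (1 - α) * x - α * a)
        < c * y ^ (-α - 1) * (k * (1 - α) * y - α * a) :=
      mul_lt_mul_of_pos_left hbx (mul_pos hc hQ0)
    linarith
  -- φ positive beyond X
  have hφposX : ∀ x : ℝ, X < x → 0 < φ x := by
    intro x hXx
    have hx : 0 < x := hXpos.trans hXx
    have hE : 0 < x ^ (-α - 1) := Real.rpow_pos_of_pos hx _
    have hb : 0 < k * (1 - α) * x - α * a := by
      have := mul_lt_mul_of_pos_left hXx (mul_pos hk h1α)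
      linarith
    simp only [hφ_def]
    nlinarith [mul_pos (mul_pos hc hE) hb, mul_nonneg hk.le hTinf]
  -- find ε with φ ε < 0
  obtain ⟨ε, hε0, hεX, hφε⟩ : ∃ ε : ℝ, 0 < ε ∧ ε ≤ X / 2 ∧ φ ε < 0 := by
    set M : ℝ := c * α * a / (2 * (k * Tinf + 1)) with hM_def
    have hM : 0 < M := by positivity
    set δ : ℝ := M ^ ((1 : ℝ) / (α + 1)) with hδ_def
    have hδ : 0 < δ := Real.rpow_pos_of_pos hM _
    refine ⟨min (X / 2) (δ / 2), by positivity, min_le_left _ _, ?_⟩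
    set ε : ℝ := min (X / 2) (δ / 2) with hε_def
    have hε0 : 0 < ε := by positivity
    have hεδ : ε < δ := lt_of_le_of_lt (min_le_right _ _) (by linarith)
    have hεX2 : ε ≤ X / 2 := min_le_left _ _
    have hs : ε ^ (α + 1) < M := by
      have h1 : ε ^ (α + 1) < δ ^ (α + 1) :=
        Real.rpow_lt_rpow hε0.le hεδ (by positivity)
      have h2 : δ ^ (α + 1) = M := by
        rw [hδ_def, ← Real.rpow_mul hM.le, one_div,
          inv_mul_cancel₀ (by positivity : α + 1 ≠ 0), Real.rpow_one]
      linarith [h2 ▸ h1]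
    have hsp : 0 < ε ^ (α + 1) := Real.rpow_pos_of_pos hε0 _
    have hεe : ε ^ (-α - 1) = (ε ^ (α + 1))⁻¹ := by
      rw [← Real.rpow_neg hε0.le]; ring_nf
    have hE0 : 0 < ε ^ (-α - 1) := Real.rpow_pos_of_pos hε0 _
    have hEs : ε ^ (-α - 1) * ε ^ (α + 1) = 1 := by
      rw [hεe]; exact inv_mul_cancel₀ hsp.ne'
    -- key: c*α*a * ε^(-α-1) > 2*(k*Tinf+1)
    have hkey : 2 * (k * Tinf + 1) < ε ^ (-α - 1) * (c * α * a) := by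
      have h1 : ε ^ (α + 1) * (2 * (k * Tinf + 1)) < c * α * a := by
        rw [hM_def] at hs
        have := (lt_div_iff₀ (by positivity : (0:ℝ) < 2 * (k * Tinf + 1))).mp hs
        linarith
      have h2 := mul_lt_mul_of_pos_left h1 hE0
      rw [← mul_assoc, hEs, one_mul] at h2
      exact h2
    have hB : k * (1 - α) * ε - α * a ≤ -(α * a) / 2 := by
      have h1 := mul_le_mul_of_nonneg_left hεX2 (mul_pos hk h1α).le
      have h2 : k * (1 - α) * (X / 2) = α * a / 2 := by
        rw [show k * (1 - α) * (X / 2) = k * (1 - α) * X / 2 from by ring, hkX]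
      linarith
    simp only [hφ_def]
    nlinarith [mul_le_mul_of_nonneg_left hB (mul_pos hc hE0).le]
  have hεX' : ε < X := by linarith
  -- continuity of φ on [ε, X]
  have hφcont : ContinuousOn φ (Set.Icc ε X) := by
    intro x hx
    have hx0 : 0 < x := lt_of_lt_of_le hε0 hx.1
    have h1 : ContinuousAt (fun y : ℝ => y ^ (-α - 1)) x :=
      Real.continuousAt_rpow_const x _ (Or.inl hx0.ne')
    exact (((continuousAt_const.mul h1).mul (by fun_prop)).add
      continuousAt_const).continuousWithinAt
  have hφX : φ X = k * Tinf := by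
    simp only [hφ_def]
    have : k * (1 - α) * X - α * a = 0 := by linarith
    rw [this]; ring
  -- IVT
  obtain ⟨x₀, hx₀mem, hφx₀⟩ : ∃ x₀ ∈ Set.Icc ε X, φ x₀ = 0 := by
    have h0 : (0 : ℝ) ∈ Set.Icc (φ ε) (φ X) := by
      constructor
      · linarith
      · rw [hφX]; exact mul_nonneg hk.le hTinf
    obtain ⟨x₀, hmem, hval⟩ := intermediate_value_Icc hεX'.le hφcont h0
    exact ⟨x₀, hmem, hval⟩
  have hx₀0 : 0 < x₀ := lt_of_lt_of_le hε0 hx₀mem.1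
  have hx₀X : x₀ ≤ X := hx₀mem.2
  -- sign of φ around x₀
  have hφneg : ∀ x : ℝ, 0 < x → x < x₀ → φ x < 0 := fun x hx hxx₀ => by
    have := hφmono x x₀ hx hxx₀ hx₀X; linarith
  have hφpos : ∀ x : ℝ, x₀ < x → 0 < φ x := by
    intro x hx₀x
    rcases le_or_gt x X with hxX | hXx
    · have := hφmono x₀ x hx₀0 hx₀x hxX; linarith
    · exact hφposX x hXx
  -- f = F on positives
  have hfF : ∀ x : ℝ, 0 < x → f x = F x := by
    intro x hx
    rw [hf x hx, hT x hx]
  -- monotonicity of F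
  have hFanti : StrictAntiOn F (Set.Ioc (0 : ℝ) x₀) := by
    apply strictAntiOn_of_deriv_neg (convex_Ioc 0 x₀)
    · exact fun x hx => ((hderiv x hx.1).continuousAt).continuousWithinAt
    · intro x hx
      rw [interior_Ioc] at hx
      rw [(hderiv x hx.1).deriv]
      exact hφneg x hx.1 hx.2
  have hFmono : StrictMonoOn F (Set.Ici x₀) := by
    apply strictMonoOn_of_deriv_pos (convex_Ici x₀)
    · exact fun x hx => ((hderiv x (lt_of_lt_of_le hx₀0 hx)).continuousAt).continuousWithinAt
    · intro x hx
      rw [interior_Ici] at hx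
      rw [(hderiv x (hx₀0.trans hx)).deriv]
      exact hφpos x hx
  refine ⟨x₀, hx₀0, hx₀X, ?_, ?_, ?_⟩
  · intro x hx y hy hxy
    rw [hfF x hx.1, hfF y hy.1]
    exact hFanti hx hy hxy
  · intro x hx y hy hxy
    rw [hfF x (lt_of_lt_of_le hx₀0 hx), hfF y (lt_of_lt_of_le hx₀0 hy)]
    exact hFmono hx hy hxy
  · intro x hx hne
    rcases lt_or_gt_of_ne hne with hlt | hgt
    · rw [hfF x hx, hfF x₀ hx₀0]
      exact hFanti ⟨hx, hlt.le⟩ ⟨hx₀0, le_refl _⟩ hlt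
    · rw [hfF x (hx₀0.trans hgt), hfF x₀ hx₀0]
      exact hFmono (Set.mem_Ici.mpr le_rfl) hgt.le hgt
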